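/- Let p_1,…,p_k be positive integers with k ≥ 2 and n = p_1 + ⋯ + p_k. Let L_i, L_i′ ⊆ [p_i] for i = 2,…,k with L_i ≠ L_i′ for at least one i. If w ∈ B_{p_1} × B_{p_2,L_2} × ⋯ × B_{p_k,L_k} and w′ ∈ B_{p_1} × B_{p_2,L_2′} × ⋯ × B_{p_k,L_k′} satisfy w < w′ in the weak order on B_n, then ℓ(w′) − ℓ(w) ≥ 3. -/

import Mathlib

open Finset

open scoped Classical

/-- The hyperoctahedral group `𝔅ₙ`, realized as the set of those permutations `w` of `ℤ`
that satisfy `w (-i) = - w i` for all `i` and fix every integer of absolute value `> n`.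
One-line notation: `w₁ ⋯ w_n` with `w_i = w i` for `1 ≤ i ≤ n`. -/
def SignedPerm (n : ℕ) : Set (Equiv.Perm ℤ) :=
  {w | (∀ i : ℤ, w (-i) = - w i) ∧ (∀ i : ℤ, (n : ℤ) < |i| → w i = i)}

/-- The inversion set `Inv(w) = {(i,j) : 1 ≤ i < j ≤ n, w_i > w_j}`. -/
noncomputable def InvSet (n : ℕ) (w : Equiv.Perm ℤ) : Finset (ℤ × ℤ) :=
  ((Finset.Icc (1 : ℤ) (n : ℤ)) ×ˢ (Finset.Icc (1 : ℤ) (n : ℤ))).filter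
    fun p => p.1 < p.2 ∧ w p.2 < w p.1

/-- The set of negative indices `Nega(w) = {i ∈ [n] : w_i < 0}`. -/
noncomputable def NegaSet (n : ℕ) (w : Equiv.Perm ℤ) : Finset ℤ :=
  (Finset.Icc (1 : ℤ) (n : ℤ)).filter fun i => w i < 0

/-- The negative sum pair set `Nsp(w) = {(i,j) : 1 ≤ i < j ≤ n, w_i + w_j < 0}`. -/
noncomputable def NspSet (n : ℕ) (w : Equiv.Perm ℤ) : Finset (ℤ × ℤ) :=
  ((Finset.Icc (1 : ℤ) (n : ℤ)) ×ˢ (Finset.Icc (1 : ℤ) (n : ℤ))).filter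
    fun p => p.1 < p.2 ∧ w p.1 + w p.2 < 0

/-- The Coxeter length of `w ∈ 𝔅ₙ`: `ℓ(w) = #Inv(w) + #Nega(w) + #Nsp(w)`. -/
noncomputable def blen (n : ℕ) (w : Equiv.Perm ℤ) : ℕ :=
  (InvSet n w).card + (NegaSet n w).card + (NspSet n w).card

/-- The left weak order on `𝔅ₙ`: `u ≤ v` iff `ℓ(v) = ℓ(u) + ℓ(v * u⁻¹)`. -/
def wle (n : ℕ) (u v : Equiv.Perm ℤ) : Prop :=
  blen n v = blen n u + blen n (v * u⁻¹)

/-- The Coxeter generators of `𝔅ₙ`: `s₀ = (1,-1)` and `sᵢ = (i,i+1)(-i,-(i+1))` for `i ≥ 1`. -/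
def sB (i : ℕ) : Equiv.Perm ℤ :=
  if i = 0 then Equiv.swap 1 (-1)
  else Equiv.swap (i : ℤ) ((i : ℤ) + 1) * Equiv.swap (-(i : ℤ)) (-((i : ℤ) + 1))

/-- `a[p] = a + p` if `a > 0`, `a - p` if `a < 0` (and `0 ↦ 0`). -/
def shiftFun (p : ℕ) (b : ℤ) : ℤ :=
  if 0 < b then b + (p : ℤ) else if b < 0 then b - (p : ℤ) else 0

/-- `w` is the shifted product `u × v ∈ 𝔅_{p+q}` of `u ∈ 𝔅_p` and `v ∈ 𝔅_q`:
its one-line notation is `(u₁, …, u_p, v₁[p], …, v_q[p])`. -/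
def IsSProd (p q : ℕ) (u v w : Equiv.Perm ℤ) : Prop :=
  w ∈ SignedPerm (p + q) ∧
  (∀ a : ℤ, 1 ≤ a → a ≤ (p : ℤ) → w a = u a) ∧
  (∀ a : ℤ, (p : ℤ) < a → a ≤ (p : ℤ) + (q : ℤ) → w a = shiftFun p (v (a - (p : ℤ))))

/-- `ξ` is a `(p,q)`-shuffle: an element of `𝔅_{p+q}` with positive entries (a permutation)
that is increasing on each of the blocks `[1,p]` and `[p+1,p+q]`. -/
def IsShuffle (p q : ℕ) (ξ : Equiv.Perm ℤ) : Prop :=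
  ξ ∈ SignedPerm (p + q) ∧
  (∀ a : ℤ, 1 ≤ a → a ≤ (p : ℤ) + (q : ℤ) → 0 < ξ a) ∧
  (∀ a b : ℤ, 1 ≤ a → a < b → b ≤ (p : ℤ) → ξ a < ξ b) ∧
  (∀ a b : ℤ, (p : ℤ) < a → a < b → b ≤ (p : ℤ) + (q : ℤ) → ξ a < ξ b)

/-- `w` is the standard signed permutation `sts(a₁ ⋯ a_m)` of the word `a₁ ⋯ a_m = a 1, …, a m`
(of nonzero integers): the unique `w ∈ 𝔅_m` with the same negative index set and
`|w_i| < |w_j| ↔ |a_i| ≤ |a_j|` for `1 ≤ i < j ≤ m`. -/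
def IsSts (m : ℕ) (a : ℤ → ℤ) (w : Equiv.Perm ℤ) : Prop :=
  w ∈ SignedPerm m ∧
  (∀ i : ℤ, 1 ≤ i → i ≤ (m : ℤ) → (w i < 0 ↔ a i < 0)) ∧
  (∀ i j : ℤ, 1 ≤ i → i < j → j ≤ (m : ℤ) → (|w i| < |w j| ↔ |a i| ≤ |a j|))

/-- The standard signed permutation of a word, as a function. -/
noncomputable def sts (m : ℕ) (a : ℤ → ℤ) : Equiv.Perm ℤ :=
  if h : ∃ w, IsSts m a w then h.choose else 1

/-- Descent set of `w ∈ 𝔅ₙ`: `Des(w) = {i ∈ [0,n-1] : w_i > w_{i+1}}` with `w₀ = 0`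
(note `w 0 = 0` holds automatically). -/
def DesSet (n : ℕ) (w : Equiv.Perm ℤ) : Finset ℕ :=
  (Finset.range n).filter fun i => w ((i : ℤ) + 1) < w (i : ℤ)

/-- Global descent set of `u ∈ 𝔅ₙ`. -/
noncomputable def GDesSet (n : ℕ) (u : Equiv.Perm ℤ) : Finset ℕ :=
  (Finset.Ico 1 n).filter fun i =>
    ∀ j k : ℤ, 1 ≤ j → j ≤ (i : ℤ) → (i : ℤ) < k → k ≤ (n : ℤ) → u k < u j

/-- `m` is the meet (greatest lower bound) of `x` and `y` within `S`, w.r.t. the weak order. -/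
def IsMeetIn (n : ℕ) (S : Set (Equiv.Perm ℤ)) (x y m : Equiv.Perm ℤ) : Prop :=
  m ∈ S ∧ wle n m x ∧ wle n m y ∧ ∀ z ∈ S, wle n z x → wle n z y → wle n z m

/-- `j` is the join (least upper bound) of `x` and `y` within `S`, w.r.t. the weak order. -/
def IsJoinIn (n : ℕ) (S : Set (Equiv.Perm ℤ)) (x y j : Equiv.Perm ℤ) : Prop :=
  j ∈ S ∧ wle n x j ∧ wle n y j ∧ ∀ z ∈ S, wle n x z → wle n y z → wle n j z

/-- The set `𝔅_p × 𝔅_{q,K} ⊆ 𝔅_{p+q}` of shifted products `u × v` with `u ∈ 𝔅_p`,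
`v ∈ 𝔅_q`, `Nega(v) = K`. -/
def SProdComp (p q : ℕ) (K : Finset ℤ) : Set (Equiv.Perm ℤ) :=
  {w | ∃ u v : Equiv.Perm ℤ, u ∈ SignedPerm p ∧ v ∈ SignedPerm q ∧ NegaSet q v = K ∧
        IsSProd p q u v w}

/-- `w` is the iterated shifted product `u⁽¹⁾ × ⋯ × u⁽ᵏ⁾` of the list `us` of signed
permutations with block sizes given by the list `ps`. -/
def IsMultiSProd (ps : List ℕ) (us : List (Equiv.Perm ℤ)) (w : Equiv.Perm ℤ) : Prop :=
  w ∈ SignedPerm ps.sum ∧ us.length = ps.length ∧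
  ∀ i < ps.length,
    us.getD i 1 ∈ SignedPerm (ps.getD i 0) ∧
    ∀ a : ℤ, ((ps.take i).sum : ℤ) < a → a ≤ ((ps.take i).sum : ℤ) + (ps.getD i 0 : ℤ) →
      w a = shiftFun ((ps.take i).sum) ((us.getD i 1) (a - ((ps.take i).sum : ℤ)))

/-- The subset `𝔅_{p₁} × 𝔅_{p₂} × ⋯ × 𝔅_{p_k}` of `𝔅_{p₁+⋯+p_k}`. -/
def MultiProdSet (ps : List ℕ) : Set (Equiv.Perm ℤ) :=
  {w | ∃ us, IsMultiSProd ps us w}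

/-- The `(L₂,…,L_k)`-component `𝔅_{p₁} × 𝔅_{p₂,L₂} × ⋯ × 𝔅_{p_k,L_k}`, where
`Ls.getD (i-1) ∅` is the prescribed negative index set of the `(i+1)`-st factor. -/
def ComponentSet (ps : List ℕ) (Ls : List (Finset ℤ)) : Set (Equiv.Perm ℤ) :=
  {w | ∃ us, IsMultiSProd ps us w ∧
        ∀ i, 1 ≤ i → i < ps.length →
          NegaSet (ps.getD i 0) (us.getD i 1) = Ls.getD (i - 1) ∅}

/-- `ξ ∈ Sh(p₁,…,p_k)`: a permutation in `𝔅_{p₁+⋯+p_k}` (all entries positive)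
increasing on each consecutive block. -/
def IsMultiShuffle (ps : List ℕ) (ξ : Equiv.Perm ℤ) : Prop :=
  ξ ∈ SignedPerm ps.sum ∧
  (∀ a : ℤ, 1 ≤ a → a ≤ (ps.sum : ℤ) → 0 < ξ a) ∧
  ∀ i < ps.length, ∀ a b : ℤ,
    ((ps.take i).sum : ℤ) < a → a < b → b ≤ ((ps.take i).sum : ℤ) + (ps.getD i 0 : ℤ) →
      ξ a < ξ b

/-- A valid tuple `(L₂,…,L_k)` of prescribed negative index sets: `L_i ⊆ [p_i]`. -/
def ValidLs (ps : List ℕ) (Ls : List (Finset ℤ)) : Prop :=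
  Ls.length = ps.length - 1 ∧
  ∀ i < ps.length - 1, Ls.getD i ∅ ⊆ Finset.Icc (1 : ℤ) (ps.getD (i + 1) 0 : ℤ)

section Aux

lemma sp_zero {n : ℕ} {w : Equiv.Perm ℤ} (hw : w ∈ SignedPerm n) : w 0 = 0 := by
  have h := hw.1 0
  simp only [neg_zero] at h
  omega

lemma sp_abs_le {n : ℕ} {w : Equiv.Perm ℤ} (hw : w ∈ SignedPerm n) {i : ℤ}
    (h : |i| ≤ (n : ℤ)) : |w i| ≤ (n : ℤ) := by
  by_contra h'
  push_neg at h'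
  have h2 : w (w i) = w i := hw.2 _ h'
  have h3 : w i = i := w.injective h2
  rw [h3] at h'
  linarith

lemma sp_ne_zero {n : ℕ} {w : Equiv.Perm ℤ} (hw : w ∈ SignedPerm n) {i : ℤ}
    (h : i ≠ 0) : w i ≠ 0 := by
  intro h0
  exact h (w.injective (by rw [h0, sp_zero hw]))

lemma sp_mul {n : ℕ} {u v : Equiv.Perm ℤ} (hu : u ∈ SignedPerm n)
    (hv : v ∈ SignedPerm n) : u * v ∈ SignedPerm n := by
  constructor
  · intro i
    simp only [Equiv.Perm.mul_apply, hv.1, hu.1]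
  · intro i hi
    simp only [Equiv.Perm.mul_apply, hv.2 i hi, hu.2 i hi]

lemma perm_apply_inv_self (u : Equiv.Perm ℤ) (x : ℤ) : u (u⁻¹ x) = x :=
  u.apply_symm_apply x

lemma sp_inv {n : ℕ} {u : Equiv.Perm ℤ} (hu : u ∈ SignedPerm n) :
    u⁻¹ ∈ SignedPerm n := by
  constructor
  · intro i
    apply u.injective
    rw [perm_apply_inv_self]
    have := hu.1 (u⁻¹ i)
    rw [perm_apply_inv_self] at this
    rw [this]
  · intro i hi
    apply u.injective
    rw [perm_apply_inv_self, hu.2 i hi]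

/-- Index set of positive roots of `Bₙ`: `(i,j)` with `-j < i < j ≤ n`, `j ≥ 1`,
representing the root `e_j - e_i` (with `e_0 = 0`, `e_{-k} = -e_k`). -/
noncomputable def RootIdx (n : ℕ) : Finset (ℤ × ℤ) :=
  ((Finset.Icc (-(n : ℤ)) (n : ℤ)) ×ˢ (Finset.Icc (1 : ℤ) (n : ℤ))).filter
    fun p => -p.2 < p.1 ∧ p.1 < p.2

/-- Root inversion set of `w`. -/
noncomputable def NB (n : ℕ) (w : Equiv.Perm ℤ) : Finset (ℤ × ℤ) :=
  (RootIdx n).filter fun p => w p.2 < w p.1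

lemma mem_RootIdx {n : ℕ} {p : ℤ × ℤ} :
    p ∈ RootIdx n ↔ 1 ≤ p.2 ∧ p.2 ≤ (n : ℤ) ∧ -p.2 < p.1 ∧ p.1 < p.2 := by
  unfold RootIdx
  simp only [Finset.mem_filter, Finset.mem_product, Finset.mem_Icc]
  constructor
  · rintro ⟨⟨⟨h1, h2⟩, h3, h4⟩, h5, h6⟩
    exact ⟨h3, h4, h5, h6⟩
  · rintro ⟨h1, h2, h3, h4⟩
    exact ⟨⟨⟨by omega, by omega⟩, h1, h2⟩, h3, h4⟩

lemma mem_NB {n : ℕ} {w : Equiv.Perm ℤ} {p : ℤ × ℤ} :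
    p ∈ NB n w ↔ (1 ≤ p.2 ∧ p.2 ≤ (n : ℤ) ∧ -p.2 < p.1 ∧ p.1 < p.2) ∧ w p.2 < w p.1 := by
  unfold NB
  rw [Finset.mem_filter, mem_RootIdx]

end Aux
section Aux2

lemma NB_card {n : ℕ} {w : Equiv.Perm ℤ} (hw : w ∈ SignedPerm n) :
    (NB n w).card = blen n w := by
  classical
  have h0 : w 0 = 0 := sp_zero hw
  have hsplit : ((NB n w).filter fun p => 0 < p.1).card
      + ((NB n w).filter fun p => ¬ 0 < p.1).card = (NB n w).card :=
    Finset.card_filter_add_card_filter_not _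
  have hsplit2 : (((NB n w).filter fun p => ¬ 0 < p.1).filter fun p => p.1 = 0).card
      + (((NB n w).filter fun p => ¬ 0 < p.1).filter fun p => ¬ p.1 = 0).card
      = ((NB n w).filter fun p => ¬ 0 < p.1).card :=
    Finset.card_filter_add_card_filter_not _
  have e1 : (NB n w).filter (fun p => 0 < p.1) = InvSet n w := by
    ext p
    simp only [Finset.mem_filter, mem_NB, InvSet, Finset.mem_product, Finset.mem_Icc]
    constructor
    · rintro ⟨⟨⟨h1, h2, h3, h4⟩, h5⟩, h6⟩
      exact ⟨⟨⟨by omega, by omega⟩, h1, h2⟩, h4, h5⟩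
    · rintro ⟨⟨⟨h1, h2⟩, h3, h4⟩, h5, h6⟩
      exact ⟨⟨⟨h3, h4, by omega, h5⟩, h6⟩, by omega⟩
  have e2 : ((NB n w).filter fun p => ¬ 0 < p.1).filter (fun p => p.1 = 0)
      = (NegaSet n w).image (fun j => ((0 : ℤ), j)) := by
    ext p
    simp only [Finset.mem_filter, mem_NB, NegaSet, Finset.mem_image, Finset.mem_Icc]
    constructor
    · rintro ⟨⟨⟨⟨h1, h2, h3, h4⟩, h5⟩, h6⟩, h7⟩
      refine ⟨p.2, ⟨⟨h1, h2⟩, ?_⟩, ?_⟩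
      · rw [h7, h0] at h5; exact h5
      · exact Prod.ext h7.symm rfl
    · rintro ⟨j, ⟨⟨h1, h2⟩, h3⟩, h4⟩
      subst h4
      exact ⟨⟨⟨⟨h1, h2, by omega, by omega⟩, by rw [h0]; exact h3⟩, by omega⟩, rfl⟩
  have e3 : ((NB n w).filter fun p => ¬ 0 < p.1).filter (fun p => ¬ p.1 = 0)
      = (NspSet n w).image (fun q => (-q.1, q.2)) := by
    ext p
    simp only [Finset.mem_filter, mem_NB, NspSet, Finset.mem_image, Finset.mem_product,
      Finset.mem_Icc]
    constructor
    · rintro ⟨⟨⟨⟨h1, h2, h3, h4⟩, h5⟩, h6⟩, h7⟩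
      have hodd := hw.1 (-p.1)
      simp only [neg_neg] at hodd
      refine ⟨⟨-p.1, p.2⟩, ⟨⟨⟨by omega, by omega⟩, h1, h2⟩, ?_, ?_⟩, by simp⟩ <;>
        dsimp only <;> omega
    · rintro ⟨⟨i, j⟩, ⟨⟨⟨h1, h2⟩, h3, h4⟩, h5, h6⟩, h7⟩
      subst h7
      have hodd : w (-i) = - w i := hw.1 i
      dsimp only at h5 h6 ⊢
      exact ⟨⟨⟨⟨h3, h4, by omega, by omega⟩, by omega⟩, by omega⟩, by omega⟩
  have c2 : (((NB n w).filter fun p => ¬ 0 < p.1).filter (fun p => p.1 = 0)).card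
      = (NegaSet n w).card := by
    rw [e2]
    exact Finset.card_image_of_injective _ (fun a b h => by simpa using h)
  have c3 : (((NB n w).filter fun p => ¬ 0 < p.1).filter (fun p => ¬ p.1 = 0)).card
      = (NspSet n w).card := by
    rw [e3]
    refine Finset.card_image_of_injective _ (fun a b h => ?_)
    have h1 := congrArg Prod.fst h
    have h2 := congrArg Prod.snd h
    simp only at h1 h2
    exact Prod.ext (by omega) h2
  unfold blen
  rw [← e1] at *
  omega

end Aux2
section Aux3

/-- Normalize a pair representing `e_b - e_a` to the positive-root form. -/
def rnorm (p : ℤ × ℤ) : ℤ × ℤ :=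
  if 0 < p.1 + p.2 then (min p.1 p.2, max p.1 p.2) else (-(max p.1 p.2), -(min p.1 p.2))

def rphi (u : Equiv.Perm ℤ) (p : ℤ × ℤ) : ℤ × ℤ := rnorm (u p.1, u p.2)

lemma rnorm_comm (a b : ℤ) : rnorm (a, b) = rnorm (b, a) := by
  simp [rnorm, min_comm, max_comm, add_comm]

lemma rnorm_pos {a b : ℤ} (h : a < b) (hs : 0 < a + b) : rnorm (a, b) = (a, b) := by
  simp [rnorm, hs, min_eq_left h.le, max_eq_right h.le]

lemma rnorm_neg {a b : ℤ} (h : a < b) (hs : a + b < 0) : rnorm (a, b) = (-b, -a) := by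
  simp [rnorm, min_eq_left h.le, max_eq_right h.le, show ¬ 0 < a + b by omega]

lemma sp_pair_facts {n : ℕ} {u : Equiv.Perm ℤ} (hu : u ∈ SignedPerm n) {p : ℤ × ℤ}
    (hp : p ∈ RootIdx n) :
    u p.1 ≠ u p.2 ∧ u p.1 + u p.2 ≠ 0 ∧
      -(n : ℤ) ≤ u p.1 ∧ u p.1 ≤ (n : ℤ) ∧ -(n : ℤ) ≤ u p.2 ∧ u p.2 ≤ (n : ℤ) := by
  obtain ⟨h1, h2, h3, h4⟩ := mem_RootIdx.mp hp
  have hne : u p.1 ≠ u p.2 := fun h => by have := u.injective h; omega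
  have hs : u p.1 + u p.2 ≠ 0 := by
    intro h
    have : u p.1 = u (-p.2) := by rw [hu.1]; omega
    have := u.injective this
    omega
  have ha : |u p.1| ≤ (n : ℤ) := sp_abs_le hu (abs_le.mpr ⟨by omega, by omega⟩)
  have hb : |u p.2| ≤ (n : ℤ) := sp_abs_le hu (abs_le.mpr ⟨by omega, by omega⟩)
  rw [abs_le] at ha hb
  exact ⟨hne, hs, ha.1, ha.2, hb.1, hb.2⟩

lemma rphi_mem {n : ℕ} {u : Equiv.Perm ℤ} (hu : u ∈ SignedPerm n) {p : ℤ × ℤ}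
    (hp : p ∈ RootIdx n) : rphi u p ∈ RootIdx n := by
  obtain ⟨hne, hs, h1, h2, h3, h4⟩ := sp_pair_facts hu hp
  rw [rphi, rnorm]
  split_ifs with h <;> rw [mem_RootIdx] <;> dsimp only <;>
    exact ⟨by omega, by omega, by omega, by omega⟩

lemma rphi_inv {n : ℕ} {u : Equiv.Perm ℤ} (hu : u ∈ SignedPerm n) {p : ℤ × ℤ}
    (hp : p ∈ RootIdx n) : rphi u⁻¹ (rphi u p) = p := by
  obtain ⟨hne, hs, _, _, _, _⟩ := sp_pair_facts hu hp
  obtain ⟨hb1, hb2, hb3, hb4⟩ := mem_RootIdx.mp hp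
  have hui : u⁻¹ ∈ SignedPerm n := sp_inv hu
  have e1 : u⁻¹ (u p.1) = p.1 := u.symm_apply_apply p.1
  have e2 : u⁻¹ (u p.2) = p.2 := u.symm_apply_apply p.2
  have e3 : u⁻¹ (-(u p.1)) = -p.1 := by rw [hui.1, e1]
  have e4 : u⁻¹ (-(u p.2)) = -p.2 := by rw [hui.1, e2]
  rcases lt_or_gt_of_ne hne with hlt | hlt <;> rcases lt_or_gt_of_ne hs with hss | hss
  · have hq : rphi u p = (-(u p.2), -(u p.1)) := by rw [rphi]; exact rnorm_neg hlt hss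
    rw [hq, rphi]
    dsimp only
    rw [e4, e3, rnorm_neg (by omega) (by omega)]
    simp
  · have hq : rphi u p = (u p.1, u p.2) := by rw [rphi]; exact rnorm_pos hlt hss
    rw [hq, rphi]
    dsimp only
    rw [e1, e2, rnorm_pos hb4 (by omega)]
  · have hq : rphi u p = (-(u p.1), -(u p.2)) := by
      rw [rphi, rnorm_comm]; exact rnorm_neg hlt (by omega)
    rw [hq, rphi]
    dsimp only
    rw [e3, e4, rnorm_comm, rnorm_neg (by omega) (by omega)]
    simp
  · have hq : rphi u p = (u p.2, u p.1) := by
      rw [rphi, rnorm_comm]; exact rnorm_pos hlt (by omega)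
    rw [hq, rphi]
    dsimp only
    rw [e2, e1, rnorm_comm, rnorm_pos hb4 (by omega)]

lemma rphi_xor {u x : Equiv.Perm ℤ} (hx : ∀ t, x (-t) = - x t) {p : ℤ × ℤ}
    (hne : u p.1 ≠ u p.2) (hs : u p.1 + u p.2 ≠ 0) :
    ((x * u) p.2 < (x * u) p.1 ↔
      ((u p.2 < u p.1) ↔ ¬ (x (rphi u p).2 < x (rphi u p).1))) := by
  have hxne : x (u p.1) ≠ x (u p.2) := fun h => hne (x.injective h)
  simp only [Equiv.Perm.mul_apply]
  rcases lt_or_gt_of_ne hne with hlt | hlt <;> rcases lt_or_gt_of_ne hs with hss | hss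
  · rw [rphi, rnorm_neg hlt hss]
    dsimp only
    rw [hx, hx]
    omega
  · rw [rphi, rnorm_pos hlt hss]
    dsimp only
    omega
  · rw [rphi, rnorm_comm, rnorm_neg hlt (by omega)]
    dsimp only
    rw [hx, hx]
    omega
  · rw [rphi, rnorm_comm, rnorm_pos hlt (by omega)]
    dsimp only
    omega

end Aux3
section Aux4

set_option maxHeartbeats 1000000 in
lemma NB_subset {n : ℕ} {u v : Equiv.Perm ℤ} (hu : u ∈ SignedPerm n)
    (hv : v ∈ SignedPerm n) (h : wle n u v) : NB n u ⊆ NB n v := by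
  classical
  have hx : v * u⁻¹ ∈ SignedPerm n := sp_mul hv (sp_inv hu)
  set x := v * u⁻¹ with hxdef
  have hxu : x * u = v := inv_mul_cancel_right v u
  set S := NB n u with hS
  set T := (RootIdx n).filter (fun p => rphi u p ∈ NB n x) with hT
  -- facts needed for the xor lemma
  have hfacts : ∀ p ∈ RootIdx n, u p.1 ≠ u p.2 ∧ u p.1 + u p.2 ≠ 0 := fun p hp => by
    obtain ⟨a, b, _⟩ := sp_pair_facts hu hp
    exact ⟨a, b⟩
  have hxor : ∀ p ∈ RootIdx n,
      (p ∈ NB n v ↔ ((p ∈ S) ↔ ¬ (p ∈ T))) := by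
    intro p hp
    obtain ⟨hne, hs⟩ := hfacts p hp
    have h1 := rphi_xor (u := u) (x := x) hx.1 hne hs
    rw [hxu] at h1
    have hqmem : rphi u p ∈ RootIdx n := rphi_mem hu hp
    have hv' : p ∈ NB n v ↔ v p.2 < v p.1 :=
      ⟨fun hh => (mem_NB.mp hh).2, fun hh => mem_NB.mpr ⟨mem_RootIdx.mp hp, hh⟩⟩
    have hu' : p ∈ S ↔ u p.2 < u p.1 :=
      ⟨fun hh => (mem_NB.mp hh).2, fun hh => mem_NB.mpr ⟨mem_RootIdx.mp hp, hh⟩⟩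
    have hT' : p ∈ T ↔ x (rphi u p).2 < x (rphi u p).1 := by
      rw [hT, Finset.mem_filter]
      constructor
      · intro hh
        exact (mem_NB.mp hh.2).2
      · intro hh
        exact ⟨hp, mem_NB.mpr ⟨mem_RootIdx.mp hqmem, hh⟩⟩
    rw [hv', hu', hT']
    exact h1
  have hTcard : T.card = (NB n x).card := by
    apply Finset.card_bij (fun p _ => rphi u p)
    · intro a ha
      exact (Finset.mem_filter.mp ha).2
    · intro a ha b hb hab
      have ha' : a ∈ RootIdx n := (Finset.mem_filter.mp ha).1
      have hb' : b ∈ RootIdx n := (Finset.mem_filter.mp hb).1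
      have := congrArg (rphi u⁻¹) hab
      rwa [rphi_inv hu ha', rphi_inv hu hb'] at this
    · intro q hq
      have hq' : q ∈ RootIdx n := Finset.filter_subset _ _ hq
      refine ⟨rphi u⁻¹ q, ?_, ?_⟩
      · have h1 : rphi u⁻¹ q ∈ RootIdx n := rphi_mem (sp_inv hu) hq'
        have h2 : rphi u (rphi u⁻¹ q) = q := by
          have := rphi_inv (sp_inv hu) hq'
          rwa [inv_inv] at this
        rw [hT]
        rw [Finset.mem_filter, h2]
        exact ⟨h1, hq⟩
      · have := rphi_inv (sp_inv hu) hq'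
        rw [inv_inv] at this
        exact this
  -- symmetric difference description
  have hsymmd : NB n v = (S ∪ T) \ (S ∩ T) := by
    ext p
    by_cases hp : p ∈ RootIdx n
    · rw [Finset.mem_sdiff, Finset.mem_union, Finset.mem_inter, hxor p hp]
      by_cases h1 : p ∈ S <;> by_cases h2 : p ∈ T <;> simp [h1, h2]
    · have h1 : p ∉ NB n v := fun hmem => hp (Finset.filter_subset _ _ hmem)
      have h2 : p ∉ S := fun hmem => hp (Finset.filter_subset _ _ hmem)
      have h3 : p ∉ T := fun hmem => hp (Finset.filter_subset _ _ hmem)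
      simp [h1, h2, h3]
  have hc1 : (S ∪ T).card + (S ∩ T).card = S.card + T.card :=
    Finset.card_union_add_card_inter S T
  have hc2 : (NB n v).card = (S ∪ T).card - (S ∩ T).card := by
    rw [hsymmd]
    exact Finset.card_sdiff_of_subset (fun a ha => Finset.mem_union_left _ (Finset.mem_inter.mp ha).1)
  have hinter : (S ∩ T).card = 0 := by
    have hlen : (NB n v).card = S.card + T.card := by
      rw [hTcard, hS, NB_card hu, NB_card hv, NB_card hx]
      exact h
    have hsub : (S ∩ T) ⊆ (S ∪ T) :=
      fun a ha => Finset.mem_union_left _ (Finset.mem_inter.mp ha).1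
    have := Finset.card_le_card hsub
    omega
  have hinter' : S ∩ T = ∅ := Finset.card_eq_zero.mp hinter
  intro p hp
  have hpR : p ∈ RootIdx n := Finset.filter_subset _ _ hp
  have hpT : p ∉ T := by
    intro hpt
    have : p ∈ S ∩ T := Finset.mem_inter.mpr ⟨hp, hpt⟩
    rw [hinter'] at this
    exact absurd this (Finset.notMem_empty p)
  exact (hxor p hpR).mpr (by tauto)

end Aux4
section Aux5

lemma Nega_subset {n : ℕ} {u v : Equiv.Perm ℤ} (hu : u ∈ SignedPerm n)
    (hv : v ∈ SignedPerm n) (h : wle n u v) : NegaSet n u ⊆ NegaSet n v := by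
  intro j hj
  rw [NegaSet, Finset.mem_filter, Finset.mem_Icc] at hj
  obtain ⟨⟨h1, h2⟩, h3⟩ := hj
  have hmem : ((0 : ℤ), j) ∈ NB n u := by
    rw [mem_NB]
    refine ⟨⟨h1, h2, by omega, by omega⟩, ?_⟩
    rw [sp_zero hu]
    exact h3
  have := NB_subset hu hv h hmem
  rw [mem_NB] at this
  rw [NegaSet, Finset.mem_filter, Finset.mem_Icc]
  refine ⟨⟨h1, h2⟩, ?_⟩
  have h4 := this.2
  rwa [sp_zero hv] at h4

lemma Inv_subset {n : ℕ} {u v : Equiv.Perm ℤ} (hu : u ∈ SignedPerm n)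
    (hv : v ∈ SignedPerm n) (h : wle n u v) : InvSet n u ⊆ InvSet n v := by
  intro p hp
  rw [InvSet, Finset.mem_filter, Finset.mem_product, Finset.mem_Icc, Finset.mem_Icc] at hp
  obtain ⟨⟨⟨h1, h2⟩, h3, h4⟩, h5, h6⟩ := hp
  have hmem : p ∈ NB n u := mem_NB.mpr ⟨⟨h3, h4, by omega, h5⟩, h6⟩
  have := NB_subset hu hv h hmem
  rw [mem_NB] at this
  rw [InvSet, Finset.mem_filter, Finset.mem_product, Finset.mem_Icc, Finset.mem_Icc]
  exact ⟨⟨⟨h1, h2⟩, h3, h4⟩, h5, this.2⟩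

lemma Nsp_subset {n : ℕ} {u v : Equiv.Perm ℤ} (hu : u ∈ SignedPerm n)
    (hv : v ∈ SignedPerm n) (h : wle n u v) : NspSet n u ⊆ NspSet n v := by
  intro p hp
  rw [NspSet, Finset.mem_filter, Finset.mem_product, Finset.mem_Icc, Finset.mem_Icc] at hp
  obtain ⟨⟨⟨h1, h2⟩, h3, h4⟩, h5, h6⟩ := hp
  have hou : u (-p.1) = - u p.1 := hu.1 p.1
  have hov : v (-p.1) = - v p.1 := hv.1 p.1
  have hmem : (-p.1, p.2) ∈ NB n u := by
    rw [mem_NB]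
    dsimp only
    exact ⟨⟨h3, h4, by omega, by omega⟩, by omega⟩
  have := NB_subset hu hv h hmem
  rw [mem_NB] at this
  have h7 := this.2
  dsimp only at h7
  rw [NspSet, Finset.mem_filter, Finset.mem_product, Finset.mem_Icc, Finset.mem_Icc]
  exact ⟨⟨⟨h1, h2⟩, h3, h4⟩, h5, by omega⟩

lemma take_sum_mono (ps : List ℕ) : Monotone fun i => (ps.take i).sum := by
  apply monotone_nat_of_le_succ
  intro i
  by_cases h : i < ps.length
  · rw [List.sum_take_succ ps i h]
    omega
  · rw [List.take_of_length_le (by omega), List.take_of_length_le (by omega)]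

lemma take_one_sum {ps : List ℕ} (h : 0 < ps.length) : (ps.take 1).sum = ps.getD 0 0 := by
  rw [List.sum_take_succ ps 0 h, List.getD_eq_getElem ps 0 h]
  simp

lemma msp_bound {ps : List ℕ} {us : List (Equiv.Perm ℤ)} {w : Equiv.Perm ℤ}
    (h : IsMultiSProd ps us w) :
    ∀ i, i ≤ ps.length → ∀ c : ℤ, 1 ≤ c → c ≤ ((ps.take i).sum : ℤ) →
      -(((ps.take i).sum : ℤ)) ≤ w c ∧ w c ≤ ((ps.take i).sum : ℤ) := by
  intro i
  induction i with
  | zero =>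
    intro _ c hc1 hc2
    simp only [List.take_zero, List.sum_nil, Nat.cast_zero] at hc2
    omega
  | succ i ih =>
    intro hle c hc1 hc2
    have hi : i < ps.length := by omega
    have hsum : (ps.take (i + 1)).sum = (ps.take i).sum + ps.getD i 0 := by
      rw [List.sum_take_succ ps i hi, List.getD_eq_getElem ps 0 hi]
    have hsumZ : ((ps.take (i + 1)).sum : ℤ) = ((ps.take i).sum : ℤ) + (ps.getD i 0 : ℤ) := by
      rw [hsum]; push_cast; ring
    by_cases hcase : c ≤ ((ps.take i).sum : ℤ)
    · have := ih (by omega) c hc1 hcase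
      omega
    · push_neg at hcase
      obtain ⟨hui, hform⟩ := h.2.2 i hi
      have hwc : w c = shiftFun (ps.take i).sum ((us.getD i 1) (c - ((ps.take i).sum : ℤ))) :=
        hform c hcase (by omega)
      have habs : |(us.getD i 1) (c - ((ps.take i).sum : ℤ))| ≤ ((ps.getD i 0 : ℕ) : ℤ) :=
        sp_abs_le hui (by rw [abs_le]; omega)
      rw [abs_le] at habs
      rw [hwc]
      unfold shiftFun
      split_ifs <;> omega

end Aux5
lemma lists_differ {Ls Ls' : List (Finset ℤ)} (hlen : Ls.length = Ls'.length)
    (hne : Ls ≠ Ls') : ∃ k, k < Ls.length ∧ ¬ (Ls.getD k ∅ = Ls'.getD k ∅) := by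
  by_contra hcon
  push_neg at hcon
  apply hne
  apply List.ext_getElem hlen
  intro k h1 h2
  have := hcon k h1
  rwa [List.getD_eq_getElem _ _ h1, List.getD_eq_getElem _ _ h2] at this
/-- If `w < w'` in the weak order on `𝔅_n` lie in components indexed by
different tuples `(L₂,…,L_k) ≠ (L₂',…,L_k')`, then `ℓ(w') − ℓ(w) ≥ 3`. -/
theorem different_components_length_gap (ps : List ℕ) (hk : 2 ≤ ps.length)
    (hpos : ∀ x ∈ ps, 0 < x) (Ls Ls' : List (Finset ℤ))
    (hLs : ValidLs ps Ls) (hLs' : ValidLs ps Ls') (hne : Ls ≠ Ls')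
    (w w' : Equiv.Perm ℤ) (hw : w ∈ ComponentSet ps Ls) (hw' : w' ∈ ComponentSet ps Ls')
    (hlt : wle ps.sum w w') (hneq : w ≠ w') :
    blen ps.sum w + 3 ≤ blen ps.sum w' := by
  classical
  obtain ⟨us, hms, hNeg⟩ := hw
  obtain ⟨us', hms', hNeg'⟩ := hw'
  have hwSP : w ∈ SignedPerm ps.sum := hms.1
  have hw'SP : w' ∈ SignedPerm ps.sum := hms'.1
  obtain ⟨k, hk1, hk2⟩ := lists_differ (hLs.1.trans hLs'.1.symm) hne
  have hkps : k < ps.length - 1 := by rw [hLs.1] at hk1; exact hk1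
  set i := k + 1 with hidef
  have hiL : i < ps.length := by omega
  have hNi : NegaSet (ps.getD i 0) (us.getD i 1) = Ls.getD k ∅ := by
    have := hNeg i (by omega) hiL
    rw [show i - 1 = k by omega] at this
    simpa using this
  have hNi' : NegaSet (ps.getD i 0) (us'.getD i 1) = Ls'.getD k ∅ := by
    have := hNeg' i (by omega) hiL
    rw [show i - 1 = k by omega] at this
    simpa using this
  have hsetne : NegaSet (ps.getD i 0) (us.getD i 1) ≠ NegaSet (ps.getD i 0) (us'.getD i 1) := by
    rw [hNi, hNi']; exact hk2
  have hex : ∃ m : ℤ, ¬ ((m ∈ NegaSet (ps.getD i 0) (us.getD i 1)) ↔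
      (m ∈ NegaSet (ps.getD i 0) (us'.getD i 1))) := by
    by_contra hcon
    push_neg at hcon
    exact hsetne (Finset.ext fun m => hcon m)
  obtain ⟨m, hm⟩ := hex
  rw [NegaSet, Finset.mem_filter, Finset.mem_Icc, NegaSet, Finset.mem_filter,
    Finset.mem_Icc] at hm
  have hmIcc : 1 ≤ m ∧ m ≤ ((ps.getD i 0 : ℕ) : ℤ) := by tauto
  have hsgn : ¬ ((us.getD i 1) m < 0 ↔ (us'.getD i 1) m < 0) := by tauto
  -- basic numeric facts
  have hp1pos : 0 < ps.getD 0 0 :=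
    hpos _ (by rw [List.getD_eq_getElem ps 0 (by omega)]; exact List.getElem_mem _)
  have hT1n : 1 ≤ (ps.take i).sum := by
    have h1 : (ps.take 1).sum ≤ (ps.take i).sum := take_sum_mono ps (by omega)
    rw [take_one_sum (by omega)] at h1
    omega
  have hT1 : (1 : ℤ) ≤ ((ps.take i).sum : ℤ) := by exact_mod_cast hT1n
  have hsum1 : (ps.take (i + 1)).sum = (ps.take i).sum + ps.getD i 0 := by
    rw [List.sum_take_succ ps i hiL, List.getD_eq_getElem ps 0 hiL]
  have hnle : (ps.take i).sum + ps.getD i 0 ≤ ps.sum := by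
    have h1 : (ps.take (i + 1)).sum ≤ (ps.take ps.length).sum := take_sum_mono ps (by omega)
    rw [List.take_length] at h1
    omega
  have hnleZ : ((ps.take i).sum : ℤ) + ((ps.getD i 0 : ℕ) : ℤ) ≤ (ps.sum : ℤ) := by
    exact_mod_cast hnle
  have hTlenZ : ((ps.take i).sum : ℤ) ≤ (ps.sum : ℤ) := by
    have := hpos (ps.getD i 0) (by rw [List.getD_eq_getElem ps 0 hiL]; exact List.getElem_mem _)
    omega
  -- the position a
  obtain ⟨hui, hform⟩ := hms.2.2 i hiL
  obtain ⟨hui', hform'⟩ := hms'.2.2 i hiL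
  have hwa : w (((ps.take i).sum : ℤ) + m) = shiftFun (ps.take i).sum ((us.getD i 1) m) := by
    have := hform (((ps.take i).sum : ℤ) + m) (by omega) (by omega)
    simpa using this
  have hw'a : w' (((ps.take i).sum : ℤ) + m) = shiftFun (ps.take i).sum ((us'.getD i 1) m) := by
    have := hform' (((ps.take i).sum : ℤ) + m) (by omega) (by omega)
    simpa using this
  have hum : (us.getD i 1) m ≠ 0 := sp_ne_zero hui (by omega)
  have hum' : (us'.getD i 1) m ≠ 0 := sp_ne_zero hui' (by omega)
  have hwa2 : ((us.getD i 1) m < 0 → w (((ps.take i).sum : ℤ) + m) ≤ -((ps.take i).sum : ℤ) - 1)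
      ∧ (0 < (us.getD i 1) m → ((ps.take i).sum : ℤ) + 1 ≤ w (((ps.take i).sum : ℤ) + m)) := by
    rw [hwa]; unfold shiftFun; split_ifs <;> constructor <;> intro <;> omega
  have hw'a2 : ((us'.getD i 1) m < 0 →
        w' (((ps.take i).sum : ℤ) + m) ≤ -((ps.take i).sum : ℤ) - 1)
      ∧ (0 < (us'.getD i 1) m →
        ((ps.take i).sum : ℤ) + 1 ≤ w' (((ps.take i).sum : ℤ) + m)) := by
    rw [hw'a]; unfold shiftFun; split_ifs <;> constructor <;> intro <;> omega
  have hNsub := Nega_subset hwSP hw'SP hlt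
  have hIsub := Inv_subset hwSP hw'SP hlt
  have hSsub := Nsp_subset hwSP hw'SP hlt
  have haIcc : 1 ≤ ((ps.take i).sum : ℤ) + m ∧ ((ps.take i).sum : ℤ) + m ≤ (ps.sum : ℤ) := by
    omega
  -- determine the sign pattern
  have hcase : 0 < (us.getD i 1) m ∧ (us'.getD i 1) m < 0 := by
    rcases lt_or_gt_of_ne hum with hneg | hpos2
    · exfalso
      have hwaneg : w (((ps.take i).sum : ℤ) + m) < 0 := by
        have := hwa2.1 hneg; omega
      have hmem : (((ps.take i).sum : ℤ) + m) ∈ NegaSet ps.sum w := by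
        rw [NegaSet, Finset.mem_filter, Finset.mem_Icc]
        exact ⟨⟨haIcc.1, haIcc.2⟩, hwaneg⟩
      have h2 := hNsub hmem
      rw [NegaSet, Finset.mem_filter] at h2
      have hw'aneg : w' (((ps.take i).sum : ℤ) + m) < 0 := h2.2
      have hB : (us'.getD i 1) m < 0 := by
        by_contra hc
        have h3 : 0 < (us'.getD i 1) m := by omega
        have := hw'a2.2 h3
        omega
      exact hsgn (iff_of_true hneg hB)
    · have hB : (us'.getD i 1) m < 0 := by
        by_contra hc
        exact hsgn (iff_of_false (by omega) hc)
      exact ⟨hpos2, hB⟩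
  have hwage : ((ps.take i).sum : ℤ) + 1 ≤ w (((ps.take i).sum : ℤ) + m) := hwa2.2 hcase.1
  have hw'ale : w' (((ps.take i).sum : ℤ) + m) ≤ -((ps.take i).sum : ℤ) - 1 :=
    hw'a2.1 hcase.2
  have hb1 := msp_bound hms i hiL.le 1 le_rfl hT1
  have hb1' := msp_bound hms' i hiL.le 1 le_rfl hT1
  -- three strict gains
  have hNega_lt : (NegaSet ps.sum w).card < (NegaSet ps.sum w').card := by
    apply Finset.card_lt_card
    refine (Finset.ssubset_iff_of_subset hNsub).mpr ⟨((ps.take i).sum : ℤ) + m, ?_, ?_⟩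
    · rw [NegaSet, Finset.mem_filter, Finset.mem_Icc]
      exact ⟨⟨haIcc.1, haIcc.2⟩, by omega⟩
    · rw [NegaSet, Finset.mem_filter, Finset.mem_Icc]
      push_neg
      intro _
      omega
  have hInv_lt : (InvSet ps.sum w).card < (InvSet ps.sum w').card := by
    apply Finset.card_lt_card
    refine (Finset.ssubset_iff_of_subset hIsub).mpr
      ⟨((1 : ℤ), ((ps.take i).sum : ℤ) + m), ?_, ?_⟩
    · rw [InvSet, Finset.mem_filter, Finset.mem_product, Finset.mem_Icc, Finset.mem_Icc]
      refine ⟨⟨⟨by omega, by omega⟩, by omega, by omega⟩, by omega, ?_⟩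
      dsimp only
      omega
    · rw [InvSet, Finset.mem_filter, Finset.mem_product, Finset.mem_Icc, Finset.mem_Icc]
      push_neg
      intro _ _
      dsimp only
      omega
  have hNsp_lt : (NspSet ps.sum w).card < (NspSet ps.sum w').card := by
    apply Finset.card_lt_card
    refine (Finset.ssubset_iff_of_subset hSsub).mpr
      ⟨((1 : ℤ), ((ps.take i).sum : ℤ) + m), ?_, ?_⟩
    · rw [NspSet, Finset.mem_filter, Finset.mem_product, Finset.mem_Icc, Finset.mem_Icc]
      refine ⟨⟨⟨by omega, by omega⟩, by omega, by omega⟩, by omega, ?_⟩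
      dsimp only
      omega
    · rw [NspSet, Finset.mem_filter, Finset.mem_product, Finset.mem_Icc, Finset.mem_Icc]
      push_neg
      intro _ _
      dsimp only
      omega
  unfold blen
  omega
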